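/- (Rectangular reduction from Col_N ∘ g to BiCol.) Let α be a finite type, let g : α → α → Bool be regular with respect to a subgroup S of Equiv.Perm α × Equiv.Perm α, let m be the cardinality of S, let N = 2^n, and let M = N * m^n. Then there exist maps A : (Fin N → (Fin n → α)) → (Fin M → (Fin n → α)) and B : (Fin N → (Fin n → α)) → (Fin M → (Fin n → α)) (A depending only on Alice's input, B only on Bob's) such that for all a, b : Fin N → (Fin n → α), writing C(a,b) : Fin M → (Fin n → α) × (Fin n → α) for the list p ↦ (A a p, B b p): (1) if the map j ↦ (fun i => g (a j i) (b j i)) from Fin N to (Fin n → Bool) is injective, then C(a,b) is injective; and (2) if that map is 2-to-1 (every value in its range has exactly two preimages), then C(a,b) is 2-to-1. -/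
import Mathlib


/-- A bipartite Boolean function `g` is regular with respect to a subgroup `S` of
`Equiv.Perm α × Equiv.Perm α` if the coordinatewise action of `S` preserves `g` and `S`
acts simply transitively on each fiber of `g`. -/
def IsRegularGadget {α : Type*} (g : α → α → Bool)
    (S : Subgroup (Equiv.Perm α × Equiv.Perm α)) : Prop :=
  (∀ s ∈ S, ∀ x y : α, g (s.1 x) (s.2 y) = g x y) ∧
  (∀ x₁ y₁ x₂ y₂ : α, g x₁ y₁ = g x₂ y₂ →
    ∃! s : S, ((s : Equiv.Perm α × Equiv.Perm α).1 x₁,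
               (s : Equiv.Perm α × Equiv.Perm α).2 y₁) = (x₂, y₂))

/-- The `Unfold` map: given an enumeration `e : Fin m ≃ S` of the symmetry group and an
input `(a, b)` to `g^n`, it sends an index tuple `I : Fin n → Fin m` to the input to `g^n`
obtained by applying the `I i`-th symmetry in the `i`-th coordinate. -/
def Unfold {α : Type*} {S : Subgroup (Equiv.Perm α × Equiv.Perm α)} {m n : ℕ}
    (e : Fin m ≃ S) (a b : Fin n → α) (I : Fin n → Fin m) :
    (Fin n → α) × (Fin n → α) :=
  (fun i => (e (I i) : Equiv.Perm α × Equiv.Perm α).1 (a i),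
   fun i => (e (I i) : Equiv.Perm α × Equiv.Perm α).2 (b i))

section Aux
variable {α : Type*} {g : α → α → Bool} {S : Subgroup (Equiv.Perm α × Equiv.Perm α)}
  {m n N : ℕ} (e : Fin m ≃ S) (a b : Fin N → Fin n → α)

/-- word map -/
def Wrd (a b : Fin N → Fin n → α) (j : Fin N) : Fin n → Bool := fun i => g (a j i) (b j i)

/-- the combined map -/
def Phi (e : Fin m ≃ S) (a b : Fin N → Fin n → α) (q : Fin N × (Fin n → Fin m)) :
    (Fin n → α) × (Fin n → α) := Unfold e (a q.1) (b q.1) q.2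

lemma phi_g (hreg : IsRegularGadget g S) (q : Fin N × (Fin n → Fin m)) (i : Fin n) :
    g ((Phi e a b q).1 i) ((Phi e a b q).2 i) = Wrd (g := g) a b q.1 i :=
  hreg.1 _ (e (q.2 i)).2 _ _

lemma phi_word (hreg : IsRegularGadget g S) {q q' : Fin N × (Fin n → Fin m)} (h : Phi e a b q = Phi e a b q') :
    Wrd (g := g) a b q.1 = Wrd (g := g) a b q'.1 := by
  funext i
  rw [← phi_g e a b hreg q i, ← phi_g e a b hreg q' i, h]

lemma phi_key (hreg : IsRegularGadget g S) (j : Fin N) (v : (Fin n → α) × (Fin n → α))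
    (hv : ∀ i, g (v.1 i) (v.2 i) = Wrd (g := g) a b j i) :
    ∃! I : Fin n → Fin m, Phi e a b (j, I) = v := by
  have hs : ∀ i, ∃! s : S, ((s : Equiv.Perm α × Equiv.Perm α).1 (a j i),
      (s : Equiv.Perm α × Equiv.Perm α).2 (b j i)) = (v.1 i, v.2 i) :=
    fun i => hreg.2 _ _ _ _ (hv i).symm
  choose s hs1 hs2 using hs
  refine ⟨fun i => e.symm (s i), ?_, ?_⟩
  · have h1 : ∀ i, ((s i : Equiv.Perm α × Equiv.Perm α).1 (a j i)) = v.1 i :=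
      fun i => congrArg Prod.fst (hs1 i)
    have h2 : ∀ i, ((s i : Equiv.Perm α × Equiv.Perm α).2 (b j i)) = v.2 i :=
      fun i => congrArg Prod.snd (hs1 i)
    refine Prod.ext ?_ ?_ <;> funext i <;>
      simp only [Phi, Unfold, Equiv.apply_symm_apply]
    · exact h1 i
    · exact h2 i
  · intro I hI
    funext i
    have hI1 : ((e (I i) : Equiv.Perm α × Equiv.Perm α).1 (a j i)) = v.1 i :=
      congrFun (congrArg Prod.fst hI) i
    have hI2 : ((e (I i) : Equiv.Perm α × Equiv.Perm α).2 (b j i)) = v.2 i :=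
      congrFun (congrArg Prod.snd hI) i
    have : e (I i) = s i := hs2 i (e (I i)) (Prod.ext hI1 hI2)
    rw [← this, Equiv.symm_apply_apply]

end Aux

/-- Rectangular reduction from `Col_N ∘ g` to `BiCol`: there are maps `A` (for Alice) and
`B` (for Bob), each depending only on that party's input, producing lists of length
`M = N·mⁿ` of inputs to `g^n`, such that the combined list `p ↦ (A a p, B b p)` is 1-to-1
whenever the encoded Collision input `j ↦ g^n(a j, b j)` is 1-to-1, and 2-to-1 whenever
it is 2-to-1. -/
theorem rectangular_reduction {α : Type*} [Fintype α]
    (g : α → α → Bool) (S : Subgroup (Equiv.Perm α × Equiv.Perm α))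
    (hreg : IsRegularGadget g S) {m n N M : ℕ}
    (hm : m = Nat.card S) (hN : N = 2 ^ n) (hM : M = N * m ^ n) :
    ∃ (A B : (Fin N → (Fin n → α)) → (Fin M → (Fin n → α))),
      ∀ a b : Fin N → (Fin n → α),
        (Function.Injective (fun j : Fin N => fun i => g (a j i) (b j i)) →
          Function.Injective (fun p : Fin M => (A a p, B b p))) ∧
        ((∀ w : Fin n → Bool, (∃ j, (fun i => g (a j i) (b j i)) = w) →
            Nat.card {j : Fin N // (fun i => g (a j i) (b j i)) = w} = 2) →
          ∀ w : (Fin n → α) × (Fin n → α), (∃ p, (A a p, B b p) = w) →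
            Nat.card {p : Fin M // (A a p, B b p) = w} = 2) := by
  classical
  have : Finite S := inferInstance
  obtain ⟨e⟩ : Nonempty (Fin m ≃ S) := ⟨(Finite.equivFinOfCardEq hm.symm).symm⟩
  have hMcard : Fintype.card (Fin M) = Fintype.card (Fin N × (Fin n → Fin m)) := by
    simp [hM]
  obtain ⟨d⟩ : Nonempty (Fin M ≃ Fin N × (Fin n → Fin m)) :=
    ⟨Fintype.equivOfCardEq hMcard⟩
  refine ⟨fun a p => (Phi e a a (d p)).1, fun b p => (Phi e b b (d p)).2, ?_⟩
  intro a b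
  have hAB : ∀ p, ((Phi e a a (d p)).1, (Phi e b b (d p)).2) = Phi e a b (d p) := by
    intro p; rfl
  constructor
  · intro hinj p p' hpp'
    have h1 : Phi e a b (d p) = Phi e a b (d p') := by
      rw [← hAB, ← hAB]; exact hpp'
    have hj : (d p).1 = (d p').1 := hinj (phi_word e a b hreg h1)
    obtain ⟨I0, hI0, huniq⟩ := phi_key e a b hreg (d p).1 (Phi e a b (d p))
      (fun i => phi_g e a b hreg (d p) i)
    have h2 : (d p).2 = I0 := huniq _
      (by show Phi e a b ((d p).1, (d p).2) = Phi e a b (d p); rw [Prod.mk.eta])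
    have h3 : (d p').2 = I0 := huniq _
      (by show Phi e a b ((d p).1, (d p').2) = Phi e a b (d p)
          rw [hj, Prod.mk.eta]; exact h1.symm)
    apply d.injective
    exact Prod.ext hj (h2.trans h3.symm)
  · intro h2to1 v hv
    obtain ⟨p₀, hp₀⟩ := hv
    have hp₀' : Phi e a b (d p₀) = v := by rw [← hAB]; exact hp₀
    set j₀ := (d p₀).1 with hj₀
    have hcardj : Nat.card {j : Fin N // Wrd (g := g) a b j = Wrd (g := g) a b j₀} = 2 :=
      h2to1 _ ⟨j₀, rfl⟩
    have hvg : ∀ i, g (v.1 i) (v.2 i) = Wrd (g := g) a b j₀ i := by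
      intro i; rw [← hp₀']; exact phi_g e a b hreg (d p₀) i
    -- bijection between fibers
    have hbij : Function.Bijective
        (fun p : {p : Fin M // ((Phi e a a (d p)).1, (Phi e b b (d p)).2) = v} =>
          (⟨(d p.1).1, by
            have h1 : Phi e a b (d p.1) = v := by rw [← hAB]; exact p.2
            exact phi_word e a b hreg (h1.trans hp₀'.symm)⟩ :
            {j : Fin N // Wrd (g := g) a b j = Wrd (g := g) a b j₀})) := by
      constructor
      · rintro ⟨p, hp⟩ ⟨p', hp'⟩ hppeq
        have hjeq : (d p).1 = (d p').1 := congrArg Subtype.val hppeq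
        have h1 : Phi e a b (d p) = v := by rw [← hAB]; exact hp
        have h1' : Phi e a b (d p') = v := by rw [← hAB]; exact hp'
        have hwv : ∀ i, g (v.1 i) (v.2 i) = Wrd (g := g) a b (d p).1 i := by
          intro i; rw [← h1]; exact phi_g e a b hreg (d p) i
        obtain ⟨I0, hI0, huniq⟩ := phi_key e a b hreg (d p).1 v hwv
        have h2 : (d p).2 = I0 := huniq _
          (by show Phi e a b ((d p).1, (d p).2) = v; rw [Prod.mk.eta]; exact h1)
        have h3 : (d p').2 = I0 := huniq _
          (by show Phi e a b ((d p).1, (d p').2) = v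
              rw [hjeq, Prod.mk.eta]; exact h1')
        exact Subtype.ext (d.injective (Prod.ext hjeq (h2.trans h3.symm)))
      · rintro ⟨j, hj⟩
        have hvg' : ∀ i, g (v.1 i) (v.2 i) = Wrd (g := g) a b j i := by
          intro i; rw [hj]; exact hvg i
        obtain ⟨I, hI, -⟩ := phi_key e a b hreg j v hvg'
        refine ⟨⟨d.symm (j, I), ?_⟩, ?_⟩
        · rw [hAB, d.apply_symm_apply]; exact hI
        · simp only [d.apply_symm_apply]
      
    have := Nat.card_congr (Equiv.ofBijective _ hbij)
    rw [this]
    exact hcardj
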